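/- Let T be a tree, S a subset of its vertices, and call a node x S-critical if x = meet(s1,s2,s3) for some s1,s2,s3 ∈ S. Then the number of S-critical nodes of T is at most 2|S| − 2 (in particular at most max(0, 2|S|−2)). -/

import Mathlib

/-- `x` lies on the (in a tree, unique) path between `a` and `b`. -/
def OnPath {V : Type*} (G : SimpleGraph V) (a b x : V) : Prop :=
  ∀ p : G.Walk a b, p.IsPath → x ∈ p.support

/-- `x` is `S`-critical: `x = meet(s₁,s₂,s₃)` for some `s₁,s₂,s₃ ∈ S`, i.e. `x` lies on
all three pairwise tree-paths between some three vertices of `S`. -/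
def SCritical {V : Type*} (G : SimpleGraph V) (S : Set V) (x : V) : Prop :=
  ∃ s₁ ∈ S, ∃ s₂ ∈ S, ∃ s₃ ∈ S,
    OnPath G s₁ s₂ x ∧ OnPath G s₂ s₃ x ∧ OnPath G s₁ s₃ x

namespace TreeAux

open SimpleGraph

variable {V : Type*} {G : SimpleGraph V}

/-- The canonical path between two vertices of a tree. -/
noncomputable def pp (hG : G.IsTree) (a b : V) : G.Walk a b :=
  (hG.existsUnique_path a b).choose

lemma pp_isPath (hG : G.IsTree) (a b : V) : (pp hG a b).IsPath :=
  (hG.existsUnique_path a b).choose_spec.1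

lemma pp_unique (hG : G.IsTree) {a b : V} (p : G.Walk a b) (hp : p.IsPath) :
    p = pp hG a b :=
  (hG.existsUnique_path a b).choose_spec.2 p hp

lemma onPath_iff (hG : G.IsTree) {a b x : V} :
    OnPath G a b x ↔ x ∈ (pp hG a b).support := by
  constructor
  · exact fun h => h _ (pp_isPath hG a b)
  · intro hx p hp
    rw [pp_unique hG p hp]; exact hx

lemma onPath_of_mem (hG : G.IsTree) {a b x : V} (p : G.Walk a b) (hp : p.IsPath)
    (hx : x ∈ p.support) : OnPath G a b x := by
  rw [onPath_iff hG, ← pp_unique hG p hp]; exact hx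

lemma onPath_self (hG : G.IsTree) {a x : V} (h : OnPath G a a x) : x = a := by
  have := h Walk.nil Walk.IsPath.nil
  simpa using this

lemma onPath_start {a b x : V} (h : x = a) : OnPath G a b x :=
  fun p _ => h ▸ p.start_mem_support

/-- Appending two paths which intersect only in the junction vertex gives a path. -/
lemma isPath_append {a m b : V} {p : G.Walk a m} {q : G.Walk m b} (hp : p.IsPath) (hq : q.IsPath)
    (h : ∀ x ∈ p.support, x ∈ q.support → x = m) : (p.append q).IsPath := by
  rw [Walk.isPath_def, Walk.support_append, List.nodup_append]
  have hqn := hq.support_nodup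
  rw [q.support_eq_cons] at hqn
  obtain ⟨hm, htail⟩ := List.nodup_cons.mp hqn
  refine ⟨hp.support_nodup, htail, ?_⟩
  intro x hx1 y hx2 hxy
  subst hxy
  have hxq : x ∈ q.support := by
    rw [q.support_eq_cons]; exact List.mem_cons_of_mem _ hx2
  have := h x hx1 hxq
  subst this
  exact hm hx2

/-- The two pieces of a path intersect only in the junction vertex. -/
lemma inter_of_isPath_append {a m b : V} {p : G.Walk a m} {q : G.Walk m b}
    (h : (p.append q).IsPath) : ∀ x ∈ p.support, x ∈ q.support → x = m := by
  intro x hx1 hx2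
  by_contra hne
  have hnd := h.support_nodup
  rw [Walk.support_append, List.nodup_append] at hnd
  have hxt : x ∈ q.support.tail := by
    rw [q.support_eq_cons] at hx2
    rcases List.mem_cons.mp hx2 with h' | h'
    · exact absurd h' hne
    · exact h'
  exact hnd.2.2 x hx1 x hxt rfl

lemma exists_gate_aux {c a : V} (w : G.Walk c a) (D : Set V) (ha : a ∈ D) :
    ∃ m ∈ D, ∃ w' : G.Walk c m, ∀ x ∈ w'.support, x ∈ D → x = m := by
  induction w with
  | nil => exact ⟨_, ha, Walk.nil, by intro x hx _; simpa using hx⟩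
  | cons huv q ih =>
    rename_i u v b
    by_cases hu : u ∈ D
    · exact ⟨u, hu, Walk.nil, by intro x hx _; simpa using hx⟩
    · obtain ⟨m, hm, w', hw'⟩ := ih ha
      refine ⟨m, hm, Walk.cons huv w', ?_⟩
      intro x hx hxD
      rw [Walk.support_cons] at hx
      rcases List.mem_cons.mp hx with rfl | hx'
      · exact absurd hxD hu
      · exact hw' x hx' hxD

lemma exists_gate {c a : V} (w : G.Walk c a) (D : Set V) (ha : a ∈ D) :
    ∃ m ∈ D, ∃ w' : G.Walk c m, w'.IsPath ∧ ∀ x ∈ w'.support, x ∈ D → x = m := by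
  classical
  obtain ⟨m, hm, w', hw'⟩ := exists_gate_aux w D ha
  exact ⟨m, hm, w'.bypass, w'.bypass_isPath,
    fun x hx hxD => hw' x (w'.support_bypass_subset hx) hxD⟩

/-- The tripod (median) structure for three vertices of a tree. -/
lemma exists_tripod (hG : G.IsTree) (r a b : V) :
    ∃ (m : V) (p1 : G.Walk m r) (p2 : G.Walk m a) (p3 : G.Walk m b),
      p1.IsPath ∧ p2.IsPath ∧ p3.IsPath ∧
      (∀ x ∈ p1.support, x ∈ p2.support → x = m) ∧
      (∀ x ∈ p1.support, x ∈ p3.support → x = m) ∧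
      (∀ x ∈ p2.support, x ∈ p3.support → x = m) := by
  classical
  set p := pp hG a b with hpdef
  have hp := pp_isPath hG a b
  obtain ⟨m, hm, w', hw'p, hw'⟩ :=
    exists_gate (pp hG r a) {x | x ∈ p.support} (p.start_mem_support)
  have hm' : m ∈ p.support := hm
  have hspec := p.take_spec hm'
  refine ⟨m, w'.reverse, (p.takeUntil m hm').reverse, p.dropUntil m hm',
    hw'p.reverse, (hp.takeUntil hm').reverse, hp.dropUntil hm', ?_, ?_, ?_⟩
  · intro x hx1 hx2
    rw [Walk.support_reverse, List.mem_reverse] at hx1 hx2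
    exact hw' x hx1 (Walk.support_takeUntil_subset _ hm' hx2)
  · intro x hx1 hx2
    rw [Walk.support_reverse, List.mem_reverse] at hx1
    exact hw' x hx1 (Walk.support_dropUntil_subset _ hm' hx2)
  · intro x hx1 hx2
    rw [Walk.support_reverse, List.mem_reverse] at hx1
    have hP : ((p.takeUntil m hm').append (p.dropUntil m hm')).IsPath := by
      rw [hspec]; exact hp
    exact inter_of_isPath_append hP x hx1 hx2

lemma onPath_or (hG : G.IsTree) (r : V) {a b x : V} (h : OnPath G a b x) :
    OnPath G r a x ∨ OnPath G r b x := by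
  obtain ⟨m, p1, p2, p3, h1, h2, h3, h12, h13, h23⟩ := exists_tripod hG r a b
  have hab : (p2.reverse.append p3).IsPath :=
    isPath_append h2.reverse h3 (by
      intro z hz hz'; rw [Walk.support_reverse, List.mem_reverse] at hz; exact h23 z hz hz')
  have hx := h _ hab
  rw [Walk.mem_support_append_iff] at hx
  rcases hx with hx | hx
  · rw [Walk.support_reverse, List.mem_reverse] at hx
    left
    have hra : (p1.reverse.append p2).IsPath :=
      isPath_append h1.reverse h2 (by
        intro z hz hz'; rw [Walk.support_reverse, List.mem_reverse] at hz; exact h12 z hz hz')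
    exact onPath_of_mem hG _ hra ((Walk.mem_support_append_iff _ _).mpr (Or.inr hx))
  · right
    have hrb : (p1.reverse.append p3).IsPath :=
      isPath_append h1.reverse h3 (by
        intro z hz hz'; rw [Walk.support_reverse, List.mem_reverse] at hz; exact h13 z hz hz')
    exact onPath_of_mem hG _ hrb ((Walk.mem_support_append_iff _ _).mpr (Or.inr hx))

lemma onPath_med (hG : G.IsTree) {r a b x y : V}
    (hx1 : OnPath G r a x) (hx2 : OnPath G r b x) (hx3 : OnPath G a b x)
    (hy1 : OnPath G r a y) (hy2 : OnPath G r b y) : OnPath G r x y := by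
  obtain ⟨m, p1, p2, p3, h1, h2, h3, h12, h13, h23⟩ := exists_tripod hG r a b
  have hra : (p1.reverse.append p2).IsPath :=
    isPath_append h1.reverse h2 (by
      intro z hz hz'; rw [Walk.support_reverse, List.mem_reverse] at hz; exact h12 z hz hz')
  have hrb : (p1.reverse.append p3).IsPath :=
    isPath_append h1.reverse h3 (by
      intro z hz hz'; rw [Walk.support_reverse, List.mem_reverse] at hz; exact h13 z hz hz')
  have hab : (p2.reverse.append p3).IsPath :=
    isPath_append h2.reverse h3 (by
      intro z hz hz'; rw [Walk.support_reverse, List.mem_reverse] at hz; exact h23 z hz hz')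
  have mem1 : ∀ z : V, OnPath G r a z → z ∈ p1.support ∨ z ∈ p2.support := by
    intro z hz
    have := hz _ hra
    rw [Walk.mem_support_append_iff] at this
    rcases this with h | h
    · left; rwa [Walk.support_reverse, List.mem_reverse] at h
    · right; exact h
  have mem2 : ∀ z : V, OnPath G r b z → z ∈ p1.support ∨ z ∈ p3.support := by
    intro z hz
    have := hz _ hrb
    rw [Walk.mem_support_append_iff] at this
    rcases this with h | h
    · left; rwa [Walk.support_reverse, List.mem_reverse] at h
    · right; exact h
  have mem3 : x ∈ p2.support ∨ x ∈ p3.support := by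
    have := hx3 _ hab
    rw [Walk.mem_support_append_iff] at this
    rcases this with h | h
    · left; rwa [Walk.support_reverse, List.mem_reverse] at h
    · right; exact h
  have hxm : x = m := by
    rcases mem1 x hx1 with u | u <;> rcases mem2 x hx2 with v | v <;> rcases mem3 with w | w
    · exact h12 x u w
    · exact h13 x u w
    · exact h12 x u w
    · exact h13 x u w
    · exact h12 x v u
    · exact h13 x v w
    · exact h23 x u v
    · exact h23 x u v
  have hy : y ∈ p1.support := by
    rcases mem1 y hy1 with h | h
    · exact h
    · rcases mem2 y hy2 with h' | h'
      · exact h'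
      · have hym : y = m := h23 y h h'
        rw [hym]; exact Walk.start_mem_support _
  subst hxm
  exact onPath_of_mem hG p1.reverse h1.reverse
    (by rw [Walk.support_reverse, List.mem_reverse]; exact hy)

lemma onPath_trans (hG : G.IsTree) {r a x y : V} (h1 : OnPath G r a x) (h2 : OnPath G r x y) :
    OnPath G r a y := by
  classical
  have hp := pp_isPath hG r a
  have hx : x ∈ (pp hG r a).support := (onPath_iff hG).1 h1
  have hy : y ∈ ((pp hG r a).takeUntil x hx).support := h2 _ (hp.takeUntil hx)
  exact (onPath_iff hG).2 (Walk.support_takeUntil_subset _ hx hy)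

lemma onPath_comp (hG : G.IsTree) {r a x y : V} (hx : OnPath G r a x) (hy : OnPath G r a y) :
    OnPath G r x y ∨ OnPath G r y x := by
  classical
  set p := pp hG r a with hpdef
  have hpp : p.IsPath := pp_isPath hG r a
  have hxp : x ∈ p.support := (onPath_iff hG).1 hx
  have hyp : y ∈ p.support := (onPath_iff hG).1 hy
  have hspec := p.take_spec hxp
  have hyp' : y ∈ (p.takeUntil x hxp).support ∨ y ∈ (p.dropUntil x hxp).support := by
    rw [← Walk.mem_support_append_iff, hspec]; exact hyp
  rcases hyp' with h | h
  · exact Or.inl (onPath_of_mem hG _ (hpp.takeUntil hxp) h)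
  · have hq : ((p.takeUntil x hxp).append ((p.dropUntil x hxp).takeUntil y h)).IsPath := by
      have heq : (((p.takeUntil x hxp).append ((p.dropUntil x hxp).takeUntil y h)).append
          ((p.dropUntil x hxp).dropUntil y h)) = p := by
        rw [← Walk.append_assoc, (p.dropUntil x hxp).take_spec h]
        exact hspec
      have h' : p.IsPath := hpp
      rw [← heq] at h'
      exact h'.of_append_left
    refine Or.inr (onPath_of_mem hG _ hq ?_)
    exact (Walk.mem_support_append_iff _ _).mpr (Or.inl (Walk.end_mem_support _))

lemma onPath_antisymm (hG : G.IsTree) {r x y : V}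
    (h1 : OnPath G r x y) (h2 : OnPath G r y x) : x = y := by
  classical
  have hpp := pp_isPath hG r x
  have hy : y ∈ (pp hG r x).support := (onPath_iff hG).1 h1
  have hspec := (pp hG r x).take_spec hy
  have hx : x ∈ ((pp hG r x).takeUntil y hy).support := h2 _ (hpp.takeUntil hy)
  have hx' : x ∈ ((pp hG r x).dropUntil y hy).support := Walk.end_mem_support _
  have hP : (((pp hG r x).takeUntil y hy).append ((pp hG r x).dropUntil y hy)).IsPath := by
    rw [hspec]; exact hpp
  exact inter_of_isPath_append hP x hx hx'

lemma crit_rep (hG : G.IsTree) {S : Set V} {x : V} (r : V) (hx : SCritical G S x) :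
    ∃ a ∈ S, ∃ b ∈ S, OnPath G r a x ∧ OnPath G r b x ∧ OnPath G a b x := by
  obtain ⟨s1, h1, s2, h2, s3, h3, c12, c23, c13⟩ := hx
  rcases onPath_or hG r c12 with d1 | d2
  · rcases onPath_or hG r c13 with e1 | e3
    · rcases onPath_or hG r c23 with f2 | f3
      · exact ⟨s1, h1, s2, h2, d1, f2, c12⟩
      · exact ⟨s1, h1, s3, h3, d1, f3, c13⟩
    · exact ⟨s1, h1, s3, h3, d1, e3, c13⟩
  · rcases onPath_or hG r c23 with f2 | f3
    · rcases onPath_or hG r c13 with e1 | e3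
      · exact ⟨s1, h1, s2, h2, e1, d2, c12⟩
      · exact ⟨s2, h2, s3, h3, d2, e3, c23⟩
    · exact ⟨s2, h2, s3, h3, d2, f3, c23⟩

/-- Counting lemma for laminar families of sets of size at least 2. -/
lemma laminar_card {V : Type*} [DecidableEq V] :
    ∀ (n : ℕ) (S : Finset V), S.card ≤ n → S.Nonempty →
    ∀ F : Finset (Finset V),
      (∀ A ∈ F, A ⊆ S) → (∀ A ∈ F, 2 ≤ A.card) →
      (∀ A ∈ F, ∀ B ∈ F, A ⊆ B ∨ B ⊆ A ∨ Disjoint A B) →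
      F.card ≤ S.card - 1 := by
  intro n
  induction n with
  | zero =>
    intro S hS hne F _ _ _
    have : S = ∅ := Finset.card_eq_zero.mp (le_antisymm hS (Nat.zero_le _))
    exact absurd this (Finset.nonempty_iff_ne_empty.mp hne)
  | succ n ih =>
    intro S hSn hne F hsub h2 hlam
    rcases Finset.eq_empty_or_nonempty F with rfl | hFne
    · simp
    obtain ⟨A, hA, hmin'⟩ := Finset.exists_minimal hFne
    have hmin : ∀ B ∈ F, ¬ B < A := fun B hB hlt => hlt.not_ge (hmin' hB hlt.le)
    have hApos : 0 < A.card := lt_of_lt_of_le (by norm_num) (h2 A hA)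
    obtain ⟨a, haA⟩ := Finset.card_pos.mp hApos
    set X := A.erase a with hX
    have hXA : X ⊆ A := Finset.erase_subset a A
    have hXcard : X.card = A.card - 1 := Finset.card_erase_of_mem haA
    have hXS : X ⊆ S := hXA.trans (hsub A hA)
    set S' := S \ X with hS'
    have haS' : a ∈ S' := Finset.mem_sdiff.mpr ⟨hsub A hA haA, by rw [hX]; exact Finset.notMem_erase a A⟩
    have hS'card : S'.card = S.card - X.card := Finset.card_sdiff_of_subset hXS
    have hAcard := h2 A hA
    have hAS := Finset.card_le_card (hsub A hA)
    clear_value X S'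
    set f : Finset V → Finset V := fun B => B \ X with hf
    have hcases : ∀ B ∈ F.erase A, A ⊆ B ∨ Disjoint A B := by
      intro B hB
      have hBF := Finset.mem_of_mem_erase hB
      have hneq := Finset.ne_of_mem_erase hB
      rcases hlam A hA B hBF with h | h | h
      · exact Or.inl h
      · exact absurd (lt_of_le_of_ne h hneq) (hmin B hBF)
      · exact Or.inr h
    have hinj : Set.InjOn f (F.erase A) := by
      intro B1 hB1 B2 hB2 heq
      simp only [Finset.coe_erase] at hB1 hB2
      have hB1' : B1 ∈ F.erase A := by
        rcases hB1 with ⟨h', h''⟩; exact Finset.mem_erase.mpr ⟨h'', h'⟩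
      have hB2' : B2 ∈ F.erase A := by
        rcases hB2 with ⟨h', h''⟩; exact Finset.mem_erase.mpr ⟨h'', h'⟩
      rcases hcases B1 hB1' with hc1 | hc1 <;> rcases hcases B2 hB2' with hc2 | hc2
      · have e1 : B1 = (B1 \ X) ∪ X := (Finset.sdiff_union_of_subset (hXA.trans hc1)).symm
        have e2 : B2 = (B2 \ X) ∪ X := (Finset.sdiff_union_of_subset (hXA.trans hc2)).symm
        rw [e1, e2]
        simp only [hf] at heq
        rw [heq]
      · exfalso
        have ha1 : a ∈ B1 \ X := Finset.mem_sdiff.mpr ⟨hc1 haA, by rw [hX]; exact Finset.notMem_erase a A⟩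
        have ha2 : a ∉ B2 \ X := fun hmem =>
          (Finset.disjoint_left.mp hc2 haA) (Finset.mem_sdiff.mp hmem).1
        simp only [hf] at heq
        rw [heq] at ha1
        exact ha2 ha1
      · exfalso
        have ha2 : a ∈ B2 \ X := Finset.mem_sdiff.mpr ⟨hc2 haA, by rw [hX]; exact Finset.notMem_erase a A⟩
        have ha1 : a ∉ B1 \ X := fun hmem =>
          (Finset.disjoint_left.mp hc1 haA) (Finset.mem_sdiff.mp hmem).1
        simp only [hf] at heq
        rw [← heq] at ha2
        exact ha1 ha2
      · have e1 : B1 \ X = B1 := by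
          apply Finset.sdiff_eq_self_of_disjoint
          exact Finset.disjoint_of_subset_right hXA hc1.symm
        have e2 : B2 \ X = B2 := by
          apply Finset.sdiff_eq_self_of_disjoint
          exact Finset.disjoint_of_subset_right hXA hc2.symm
        simp only [hf] at heq
        rw [← e1, ← e2, heq]
    set F' := (F.erase A).image f with hF'
    have hF'card : F'.card = F.card - 1 := by
      rw [hF', Finset.card_image_of_injOn hinj, Finset.card_erase_of_mem hA]
    have hIH := ih S' (by rw [hS'card, hXcard]; omega) ⟨a, haS'⟩ F'
      (by
        intro B' hB'
        obtain ⟨B, hB, rfl⟩ := Finset.mem_image.mp hB'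
        simp only [hf, hS']
        exact Finset.sdiff_subset_sdiff (hsub B (Finset.mem_of_mem_erase hB)) Finset.Subset.rfl)
      (by
        intro B' hB'
        obtain ⟨B, hB, rfl⟩ := Finset.mem_image.mp hB'
        simp only [hf]
        rcases hcases B hB with hc | hc
        · have hne : A ⊂ B := lt_of_le_of_ne hc (Finset.ne_of_mem_erase hB).symm
          obtain ⟨xx, hxxB, hxxA⟩ := Finset.exists_of_ssubset hne
          have h1 : a ∈ B \ X := Finset.mem_sdiff.mpr ⟨hc haA, by rw [hX]; exact Finset.notMem_erase a A⟩
          have h2' : xx ∈ B \ X := Finset.mem_sdiff.mpr ⟨hxxB, fun hx => hxxA (hXA hx)⟩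
          have hax : a ≠ xx := fun h => hxxA (h ▸ haA)
          exact Finset.one_lt_card.mpr ⟨a, h1, xx, h2', hax⟩
        · have e : B \ X = B := by
            apply Finset.sdiff_eq_self_of_disjoint
            exact Finset.disjoint_of_subset_right hXA hc.symm
          rw [e]
          exact h2 B (Finset.mem_of_mem_erase hB))
      (by
        intro B1' hB1' B2' hB2'
        obtain ⟨B1, hB1, rfl⟩ := Finset.mem_image.mp hB1'
        obtain ⟨B2, hB2, rfl⟩ := Finset.mem_image.mp hB2'
        simp only [hf]
        rcases hlam B1 (Finset.mem_of_mem_erase hB1) B2 (Finset.mem_of_mem_erase hB2)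
          with h | h | h
        · exact Or.inl (Finset.sdiff_subset_sdiff h Finset.Subset.rfl)
        · exact Or.inr (Or.inl (Finset.sdiff_subset_sdiff h Finset.Subset.rfl))
        · exact Or.inr (Or.inr
            (Finset.disjoint_of_subset_left Finset.sdiff_subset
              (Finset.disjoint_of_subset_right Finset.sdiff_subset h))))
    omega

end TreeAux

open TreeAux in
/-- In a tree `T` with a subset `S` of vertices (`|S| ≥ 2`), the number of `S`-critical
nodes is at most `2|S| - 2`. -/
theorem stmt4 {V : Type*} [Fintype V] (G : SimpleGraph V) (hG : G.IsTree)
    (S : Finset V) (hS : 2 ≤ S.card) :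
    {x : V | SCritical G (S : Set V) x}.ncard ≤ 2 * S.card - 2 := by
  classical
  obtain ⟨r, hr⟩ := Finset.card_pos.mp (by omega : 0 < S.card)
  set k : V → Finset V := fun x => S.filter (fun a => OnPath G r a x) with hk
  set C : Finset V := Finset.univ.filter (fun x => SCritical G (S : Set V) x) with hC
  have hset : {x : V | SCritical G (S : Set V) x} = ↑C := by
    ext x; simp [hC]
  rw [hset, Set.ncard_coe_finset]
  have hCrit : ∀ x ∈ C, SCritical G (S : Set V) x := by
    intro x hx; rw [hC] at hx; exact (Finset.mem_filter.mp hx).2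
  -- membership facts about k
  have hkmem : ∀ x a, a ∈ k x ↔ a ∈ S ∧ OnPath G r a x := by
    intro x a; simp [hk]
  -- injectivity on C
  have hkinj : Set.InjOn k (C : Set V) := by
    intro x hx y hy hxy
    obtain ⟨a, haS, b, hbS, hrax, hrbx, habx⟩ := crit_rep hG r (hCrit x (by exact_mod_cast hx))
    obtain ⟨a', haS', b', hbS', hray', hrby', haby'⟩ := crit_rep hG r (hCrit y (by exact_mod_cast hy))
    have hay : OnPath G r a y := by
      have : a ∈ k y := hxy ▸ (hkmem x a).mpr ⟨haS, hrax⟩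
      exact ((hkmem y a).mp this).2
    have hby : OnPath G r b y := by
      have : b ∈ k y := hxy ▸ (hkmem x b).mpr ⟨hbS, hrbx⟩
      exact ((hkmem y b).mp this).2
    have hax' : OnPath G r a' x := by
      have : a' ∈ k x := hxy ▸ (hkmem y a').mpr ⟨haS', hray'⟩
      exact ((hkmem x a').mp this).2
    have hbx' : OnPath G r b' x := by
      have : b' ∈ k x := hxy ▸ (hkmem y b').mpr ⟨hbS', hrby'⟩
      exact ((hkmem x b').mp this).2
    have h1 : OnPath G r x y := onPath_med hG hrax hrbx habx hay hby
    have h2 : OnPath G r y x := onPath_med hG hray' hrby' haby' hax' hbx'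
    exact onPath_antisymm hG h1 h2
  set F : Finset (Finset V) := C.image k with hF
  have hcard : C.card = F.card := (Finset.card_image_of_injOn hkinj).symm
  -- properties of F
  have hFsub : ∀ A ∈ F, A ⊆ S := by
    intro A hA
    obtain ⟨x, _, rfl⟩ := Finset.mem_image.mp hA
    exact Finset.filter_subset _ _
  have hFne : ∀ A ∈ F, A.Nonempty := by
    intro A hA
    obtain ⟨x, hx, rfl⟩ := Finset.mem_image.mp hA
    obtain ⟨a, haS, b, hbS, hrax, _, _⟩ := crit_rep hG r (hCrit x hx)
    exact ⟨a, (hkmem x a).mpr ⟨haS, hrax⟩⟩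
  have hFlam : ∀ A ∈ F, ∀ B ∈ F, A ⊆ B ∨ B ⊆ A ∨ Disjoint A B := by
    intro A hA B hB
    obtain ⟨x, _, rfl⟩ := Finset.mem_image.mp hA
    obtain ⟨y, _, rfl⟩ := Finset.mem_image.mp hB
    by_cases hd : Disjoint (k x) (k y)
    · exact Or.inr (Or.inr hd)
    · obtain ⟨a, hax, hay⟩ := Finset.not_disjoint_iff.mp hd
      have hax' := ((hkmem x a).mp hax).2
      have hay' := ((hkmem y a).mp hay).2
      rcases onPath_comp hG hax' hay' with h | h
      · refine Or.inl ?_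
        intro b hb
        obtain ⟨hbS, hbx⟩ := (hkmem x b).mp hb
        exact (hkmem y b).mpr ⟨hbS, onPath_trans hG hbx h⟩
      · refine Or.inr (Or.inl ?_)
        intro b hb
        obtain ⟨hbS, hby⟩ := (hkmem y b).mp hb
        exact (hkmem x b).mpr ⟨hbS, onPath_trans hG hby h⟩
  have hFr : ({r} : Finset V) ∉ F := by
    intro hmem
    obtain ⟨x, hx, hkx⟩ := Finset.mem_image.mp hmem
    have hrkx : r ∈ k x := by rw [hkx]; exact Finset.mem_singleton_self r
    have hxr : x = r := onPath_self hG ((hkmem x r).mp hrkx).2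
    have : k x = S := by
      apply Finset.filter_true_of_mem
      intro a _
      rw [hxr]
      exact onPath_start rfl
    rw [this] at hkx
    have : S.card = 1 := by rw [hkx]; exact Finset.card_singleton r
    omega
  -- split F by cardinality
  have hsplit := Finset.card_filter_add_card_filter_not
    (s := F) (p := fun A => A.card ≤ 1)
  set F1 := F.filter (fun A => A.card ≤ 1) with hF1
  set F2 := F.filter (fun A => ¬ A.card ≤ 1) with hF2
  have hF1bound : F1.card ≤ S.card - 1 := by
    have hsub1 : F1 ⊆ (S.erase r).image (fun a => ({a} : Finset V)) := by
      intro A hA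
      obtain ⟨hAF, hA1⟩ := Finset.mem_filter.mp hA
      obtain ⟨a, rfl⟩ := Finset.card_eq_one.mp
        (le_antisymm hA1 (Finset.card_pos.mpr (hFne A hAF)))
      refine Finset.mem_image.mpr ⟨a, ?_, rfl⟩
      refine Finset.mem_erase.mpr ⟨?_, hFsub _ hAF (Finset.mem_singleton_self a)⟩
      intro harr
      exact hFr (harr ▸ hAF)
    calc F1.card ≤ ((S.erase r).image (fun a => ({a} : Finset V))).card :=
          Finset.card_le_card hsub1
      _ ≤ (S.erase r).card := Finset.card_image_le
      _ = S.card - 1 := Finset.card_erase_of_mem hr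
  have hF2bound : F2.card ≤ S.card - 1 := by
    apply laminar_card S.card S le_rfl ⟨r, hr⟩
    · intro A hA
      exact hFsub A (Finset.mem_of_mem_filter A hA)
    · intro A hA
      have := (Finset.mem_filter.mp hA).2
      omega
    · intro A hA B hB
      exact hFlam A (Finset.mem_of_mem_filter A hA) B (Finset.mem_of_mem_filter B hB)
  omega
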